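/- With A, c_k, B_k, J_k as defined, for any partition A = A₁ ⊔ A₂: if c_k ∈ A₁ then J_k ∩ (A₂ + A₂) = ∅, and if c_k ∈ A₂ then J_k ∩ (A₁ + A₁) = ∅. -/
import Mathlib


open Pointwise

def c (k : ℕ) : ℕ := 4 * 5 ^ (k - 1)
def B (k : ℕ) : Set ℕ := Set.Icc (5 * 5 ^ (k - 1)) (6 * 5 ^ (k - 1) - 1)
def F (k : ℕ) : Set ℕ := Set.Icc (10 * 5 ^ (k - 1) - 1) (15 * 5 ^ (k - 1))
def A : Set ℕ := Set.Icc 2 3 ∪ ⋃ k ∈ {k : ℕ | 1 ≤ k}, ({c k} ∪ B k ∪ F k)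

def J (k : ℕ) : Set ℕ := Set.Icc (9 * 5 ^ (k - 1)) (10 * 5 ^ (k - 1) - 1)

lemma pow5 (a b : ℕ) : 5 ^ a ≤ 5 ^ b ∨ 5 * 5 ^ b ≤ 5 ^ a := by
  rcases le_or_gt a b with h | h
  · exact Or.inl (Nat.pow_le_pow_right (by norm_num) h)
  · right
    have : 5 ^ (b + 1) ≤ 5 ^ a := Nat.pow_le_pow_right (by norm_num) h
    calc 5 * 5 ^ b = 5 ^ (b + 1) := by ring
    _ ≤ 5 ^ a := this

lemma memA {x : ℕ} (h : x ∈ A) :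
    (2 ≤ x ∧ x ≤ 3) ∨ ∃ j, 1 ≤ j ∧
      ((x = 4 * 5 ^ (j - 1) ∨
       (5 * 5 ^ (j - 1) ≤ x ∧ x ≤ 6 * 5 ^ (j - 1) - 1)) ∨
       (10 * 5 ^ (j - 1) ≤ x + 1 ∧ x ≤ 15 * 5 ^ (j - 1))) := by
  simpa [A, c, B, F, Set.mem_Icc, Set.mem_iUnion, Set.mem_setOf_eq] using h

lemma memA_two_le {x : ℕ} (h : x ∈ A) : 2 ≤ x := by
  rcases memA h with ⟨h1, _⟩ | ⟨j, hj, h'⟩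
  · exact h1
  · have hs : 1 ≤ 5 ^ (j - 1) := Nat.one_le_pow _ _ (by norm_num)
    rcases h' with (h' | h') | h' <;> omega

lemma rigid {k x y : ℕ} (hk : 1 ≤ k) (hx : x ∈ A) (hy : y ∈ A)
    (hxy : x ≤ y) (hJ : x + y ∈ J k) : x = c k := by
  have ht : 1 ≤ 5 ^ (k - 1) := Nat.one_le_pow _ _ (by norm_num)
  rw [J, Set.mem_Icc] at hJ
  have hx2 : 2 ≤ x := memA_two_le hx
  -- step 1: locate y in B k
  have hyB : 5 * 5 ^ (k - 1) ≤ y ∧ y ≤ 6 * 5 ^ (k - 1) - 1 := by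
    rcases memA hy with ⟨h1, h2⟩ | ⟨j, hj, h'⟩
    · omega
    · have hs : 1 ≤ 5 ^ (j - 1) := Nat.one_le_pow _ _ (by norm_num)
      have d1 := pow5 (j - 1) (k - 1)
      have d2 := pow5 (k - 1) (j - 1)
      rcases h' with (h' | h') | h' <;> omega
  -- step 2: locate x
  rcases memA hx with ⟨h1, h2⟩ | ⟨j, hj, h'⟩
  · omega
  · have hs : 1 ≤ 5 ^ (j - 1) := Nat.one_le_pow _ _ (by norm_num)
    have d1 := pow5 (j - 1) (k - 1)
    have d2 := pow5 (k - 1) (j - 1)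
    show x = 4 * 5 ^ (k - 1)
    rcases h' with (h' | h') | h' <;> omega

theorem stmt_14 (A₁ A₂ : Set ℕ) (hunion : A₁ ∪ A₂ = A)
    (hdisj : Disjoint A₁ A₂) (k : ℕ) (hk : 1 ≤ k) :
    (c k ∈ A₁ → J k ∩ (A₂ + A₂) = ∅) ∧
    (c k ∈ A₂ → J k ∩ (A₁ + A₁) = ∅) := by
  have key : ∀ (S T : Set ℕ), S ∪ T = A → Disjoint S T → c k ∈ S →
      J k ∩ (T + T) = ∅ := by
    intro S T hu hd hc
    ext n
    simp only [Set.mem_inter_iff, Set.mem_empty_iff_false, iff_false, not_and]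
    intro hnJ hn
    rw [Set.mem_add] at hn
    obtain ⟨a, ha, b, hb, rfl⟩ := hn
    have haA : a ∈ A := hu ▸ Set.mem_union_right S ha
    have hbA : b ∈ A := hu ▸ Set.mem_union_right S hb
    have hcT : c k ∈ T := by
      rcases le_total a b with hab | hab
      · exact (rigid hk haA hbA hab hnJ) ▸ ha
      · exact (rigid hk hbA haA hab (by rwa [add_comm])) ▸ hb
    exact Set.disjoint_left.mp hd hc hcT
  exact ⟨key A₁ A₂ hunion hdisj,
    key A₂ A₁ (by rw [Set.union_comm]; exact hunion) hdisj.symm⟩
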